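/- Let Σ be a K×K symmetric positive-definite matrix whose inverse Σ⁻¹ has non-positive off-diagonal entries (i.e. Σ⁻¹ is an M-matrix), and let α ∈ ℝ^K have strictly positive coordinates. Then for every q ∈ ℝ_{≥0}^K, the vector γ = (Σ⁻¹ + diag(q))⁻¹α has strictly positive coordinates. -/

import Mathlib

open Matrix

lemma mmat_nonneg {K : ℕ} (B : Matrix (Fin K) (Fin K) ℝ) (hB : B.PosDef)
    (hoff : ∀ i j, i ≠ j → B i j ≤ 0) (x : Fin K → ℝ)
    (hc : ∀ i, 0 ≤ (B *ᵥ x) i) : ∀ i, 0 ≤ x i := by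
  set y : Fin K → ℝ := fun i => max (-(x i)) 0 with hy
  set z : Fin K → ℝ := fun i => max (x i) 0 with hz
  have hzxy : z = x + y := by
    funext i
    simp only [hy, hz, Pi.add_apply]
    rcases le_total (x i) 0 with h | h
    · simp [max_eq_right h, max_eq_left (neg_nonneg.mpr h)]
    · simp [max_eq_left h, max_eq_right (neg_nonpos.mpr h)]
  have hy0 : y = 0 := by
    by_contra hne
    have hpos := hB.dotProduct_mulVec_pos hne
    rw [star_trivial] at hpos
    have h1 : y ⬝ᵥ (B *ᵥ z) ≤ 0 := by
      rw [dotProduct]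
      apply Finset.sum_nonpos
      intro i _
      rw [mulVec, dotProduct, Finset.mul_sum]
      apply Finset.sum_nonpos
      intro j _
      rcases eq_or_ne i j with rfl | hij
      · have : y i * z i = 0 := by
          simp only [hy, hz]
          rcases le_total (x i) 0 with h | h
          · simp [max_eq_right h]
          · simp [max_eq_right (neg_nonpos.mpr h)]
        have h0 : y i * (B i i * z i) = B i i * (y i * z i) := by ring
        rw [h0, this, mul_zero]
      · have hyi : 0 ≤ y i := le_max_right _ _
        have hzj : 0 ≤ z j := le_max_right _ _
        have := hoff i j hij
        nlinarith [mul_nonneg hyi hzj]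
    have h2 : 0 ≤ y ⬝ᵥ (B *ᵥ x) := by
      apply Finset.sum_nonneg
      intro i _
      exact mul_nonneg (le_max_right _ _) (hc i)
    have h3 : y ⬝ᵥ (B *ᵥ y) ≤ 0 := by
      have : y ⬝ᵥ (B *ᵥ z) = y ⬝ᵥ (B *ᵥ x) + y ⬝ᵥ (B *ᵥ y) := by
        rw [hzxy, mulVec_add, dotProduct_add]
      linarith
    linarith
  intro i
  have : max (-(x i)) 0 = 0 := congrFun hy0 i
  have : -(x i) ≤ 0 := by
    by_contra h
    push_neg at h
    rw [max_eq_left h.le] at this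
    linarith
  linarith

theorem stmt_6 {K : ℕ} (S : Matrix (Fin K) (Fin K) ℝ) (hS : S.PosDef)
    (hM : ∀ i j, i ≠ j → S⁻¹ i j ≤ 0)
    (α : Fin K → ℝ) (hα : ∀ i, 0 < α i)
    (q : Fin K → ℝ) (hq : ∀ i, 0 ≤ q i) :
    ∀ i, 0 < ((S⁻¹ + diagonal q)⁻¹ *ᵥ α) i := by
  set B := S⁻¹ + diagonal q with hBdef
  have hBpd : B.PosDef := by
    apply (hS.inv).add_posSemidef
    exact posSemidef_diagonal_iff.mpr fun i => hq i
  have hoff : ∀ i j, i ≠ j → B i j ≤ 0 := by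
    intro i j hij
    simp only [hBdef, Matrix.add_apply, diagonal_apply_ne _ hij, add_zero]
    exact hM i j hij
  set γ := B⁻¹ *ᵥ α with hγ
  have hBγ : B *ᵥ γ = α := by
    rw [hγ, mulVec_mulVec, Matrix.mul_nonsing_inv _ (isUnit_iff_ne_zero.mpr hBpd.det_pos.ne'), one_mulVec]
  have hnn : ∀ i, 0 ≤ γ i :=
    mmat_nonneg B hBpd hoff γ (by rw [hBγ]; exact fun i => (hα i).le)
  intro i
  by_contra hcon
  push_neg at hcon
  have hγi : γ i = 0 := le_antisymm hcon (hnn i)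
  have : (B *ᵥ γ) i ≤ 0 := by
    rw [mulVec, dotProduct]
    apply Finset.sum_nonpos
    intro j _
    rcases eq_or_ne i j with rfl | hij
    · rw [hγi, mul_zero]
    · exact mul_nonpos_of_nonpos_of_nonneg (hoff i j hij) (hnn j)
  rw [hBγ] at this
  exact absurd (hα i) (not_lt.mpr this)
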